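/- For all real numbers a, b > 0 with a ≠ b and all v ∈ (0,1), one has a♯_v b ≤ ((1−v)a + v√(ab))^{1−v}·(√(ab)·(1−v) + v b)^{v} ≤ I_v(a,b); that is, a♯_v b ≤ (a∇_v(a♯b))♯_v((a♯b)∇_v b) ≤ I_v(a,b), where a♯b = √(ab). -/

import Mathlib

/-- The logarithmic mean of two positive reals. -/
noncomputable def logMean (a b : ℝ) : ℝ :=
  if a = b then a else (b - a) / (Real.log b - Real.log a)

/-- The identric mean of two positive reals. -/
noncomputable def idMean (a b : ℝ) : ℝ :=
  if a = b then a else Real.exp (-1) * (b ^ b / a ^ a) ^ (b - a)⁻¹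

/-- The weighted arithmetic mean `a ∇_v b`. -/
def wArith (v a b : ℝ) : ℝ := (1 - v) * a + v * b

/-- The weighted geometric mean `a ♯_v b`. -/
noncomputable def wGeom (v a b : ℝ) : ℝ := a ^ (1 - v) * b ^ v

/-- The weighted harmonic mean `a !_v b`. -/
noncomputable def wHarm (v a b : ℝ) : ℝ := ((1 - v) / a + v / b)⁻¹

/-- The weighted logarithmic mean `L_v(a,b)` (for `a ≠ b`, `v ∈ (0,1)`). -/
noncomputable def wLog (v a b : ℝ) : ℝ :=
  (1 / (Real.log a - Real.log b)) *
    (((1 - v) / v) * (a - a ^ (1 - v) * b ^ v) + (v / (1 - v)) * (a ^ (1 - v) * b ^ v - b))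

/-- The weighted identric mean `I_v(a,b)` (for `a ≠ b`, `v ∈ (0,1)`). -/
noncomputable def wId (v a b : ℝ) : ℝ :=
  Real.exp (-1) * wArith v a b ^ ((1 - 2 * v) * wArith v a b / (v * (1 - v) * (b - a))) *
    (b ^ (v * b / (1 - v)) / a ^ ((1 - v) * a / v)) ^ (b - a)⁻¹

lemma aux_log_lb {t : ℝ} (ht : 1 ≤ t) : 2 * (t - 1) ≤ (t + 1) * Real.log t := by
  set f : ℝ → ℝ := fun x => (x + 1) * Real.log x - 2 * (x - 1) with hf
  have hder : ∀ x ∈ Set.Ioi (1 : ℝ), HasDerivAt f (Real.log x + (x + 1) * x⁻¹ - 2) x := by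
    intro x hx
    have hx0 : (0 : ℝ) < x := lt_trans one_pos hx
    have h1 : HasDerivAt (fun y : ℝ => (y + 1) * Real.log y)
        (1 * Real.log x + (x + 1) * x⁻¹) x :=
      (((hasDerivAt_id x).add_const 1)).mul (Real.hasDerivAt_log hx0.ne')
    have h2 : HasDerivAt (fun y : ℝ => 2 * (y - 1)) 2 x := by
      simpa using ((hasDerivAt_id x).sub_const 1).const_mul 2
    have h3 := h1.sub h2
    rw [one_mul] at h3
    exact h3
  have hmono : MonotoneOn f (Set.Ici (1 : ℝ)) := by
    apply monotoneOn_of_deriv_nonneg (convex_Ici 1)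
    · apply ContinuousOn.sub
      · exact (continuousOn_id.add continuousOn_const).mul
          (Real.continuousOn_log.mono (fun x hx => by
            simp only [Set.mem_compl_iff, Set.mem_singleton_iff]
            exact ne_of_gt (lt_of_lt_of_le one_pos hx)))
      · fun_prop
    · intro x hx
      rw [interior_Ici] at hx
      exact (hder x hx).differentiableAt.differentiableWithinAt
    · intro x hx
      rw [interior_Ici] at hx
      rw [(hder x hx).deriv]
      have hx0 : (0 : ℝ) < x := lt_trans one_pos hx
      have hlog := Real.one_sub_inv_le_log_of_pos hx0
      have : (x + 1) * x⁻¹ = 1 + x⁻¹ := by field_simp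
      linarith
  have h := hmono (Set.self_mem_Ici) (Set.mem_Ici.2 ht) ht
  simp only [hf, Real.log_one] at h
  linarith

lemma aux_key {x y : ℝ} (hx : 0 < x) (hy : 0 < y) :
    2 * (x - y) ^ 2 ≤ (x + y) * (x - y) * (Real.log x - Real.log y) := by
  have core : ∀ p q : ℝ, 0 < q → q ≤ p →
      2 * (p - q) ^ 2 ≤ (p + q) * (p - q) * (Real.log p - Real.log q) := by
    intro p q hq hqp
    have hp : 0 < p := lt_of_lt_of_le hq hqp
    have h1 := aux_log_lb (t := p / q) ((one_le_div hq).2 hqp)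
    rw [Real.log_div hp.ne' hq.ne'] at h1
    have h2 := mul_le_mul_of_nonneg_left h1 hq.le
    have h3 : 2 * (p - q) ≤ (p + q) * (Real.log p - Real.log q) := by
      have e1 : q * (2 * (p / q - 1)) = 2 * (p - q) := by field_simp
      have e2 : q * ((p / q + 1) * (Real.log p - Real.log q))
          = (p + q) * (Real.log p - Real.log q) := by field_simp
      linarith
    nlinarith [mul_le_mul_of_nonneg_right h3 (sub_nonneg.2 hqp)]
  rcases le_total y x with h | h
  · exact core x y hy h
  · have := core y x hx h
    nlinarith [this]

/-- `a♯_v b ≤ (a∇_v(a♯b)) ♯_v ((a♯b)∇_v b) ≤ I_v(a,b)`, where `a♯b = √(ab)`. -/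
theorem wGeom_le_mixed_le_wId (a b v : ℝ) (ha : 0 < a) (hb : 0 < b) (hab : a ≠ b)
    (hv : v ∈ Set.Ioo (0 : ℝ) 1) :
    wGeom v a b ≤
        ((1 - v) * a + v * Real.sqrt (a * b)) ^ (1 - v) *
          (Real.sqrt (a * b) * (1 - v) + v * b) ^ v ∧
      ((1 - v) * a + v * Real.sqrt (a * b)) ^ (1 - v) *
          (Real.sqrt (a * b) * (1 - v) + v * b) ^ v ≤ wId v a b := by
  obtain ⟨hv0, hv1⟩ := hv
  have h1v : (0 : ℝ) < 1 - v := by linarith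
  have hab0 : (0 : ℝ) < a * b := mul_pos ha hb
  set g : ℝ := Real.sqrt (a * b) with hgdef
  have hg : 0 < g := Real.sqrt_pos.2 hab0
  have hg2 : g ^ 2 = a * b := Real.sq_sqrt hab0.le
  have hLg : Real.log g = (Real.log a + Real.log b) / 2 := by
    rw [hgdef, Real.log_sqrt hab0.le, Real.log_mul ha.ne' hb.ne']
  set X : ℝ := (1 - v) * a + v * g with hXdef
  set Y : ℝ := g * (1 - v) + v * b with hYdef
  have hX : 0 < X := add_pos (mul_pos h1v ha) (mul_pos hv0 hg)
  have hY : 0 < Y := add_pos (mul_pos hg h1v) (mul_pos hv0 hb)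
  set c : ℝ := (1 - v) * a + v * b with hcdef
  have hc : 0 < c := add_pos (mul_pos h1v ha) (mul_pos hv0 hb)
  set La := Real.log a
  set Lb := Real.log b
  set Lc := Real.log c
  constructor
  · -- first inequality
    rw [wGeom, ← Real.log_le_log_iff (by positivity) (by positivity),
      Real.log_mul (by positivity) (by positivity),
      Real.log_mul (by positivity) (by positivity),
      Real.log_rpow ha, Real.log_rpow hb, Real.log_rpow hX, Real.log_rpow hY]
    have hXlog : (1 - v) * La + v * Real.log g ≤ Real.log X := by
      have hgm := Real.geom_mean_le_arith_mean2_weighted h1v.le hv0.le ha.le hg.le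
        (by ring)
      have : Real.log (a ^ (1 - v) * g ^ v) ≤ Real.log X :=
        (Real.log_le_log_iff (by positivity) hX).2 hgm
      rw [Real.log_mul (by positivity) (by positivity), Real.log_rpow ha,
        Real.log_rpow hg] at this
      linarith
    have hYlog : (1 - v) * Real.log g + v * Lb ≤ Real.log Y := by
      have hgm := Real.geom_mean_le_arith_mean2_weighted h1v.le hv0.le hg.le hb.le
        (by ring)
      have : Real.log (g ^ (1 - v) * b ^ v) ≤ Real.log Y := by
        apply (Real.log_le_log_iff (by positivity) hY).2
        calc g ^ (1-v) * b ^ v ≤ (1 - v) * g + v * b := hgm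
          _ = Y := by rw [hYdef]; ring
      rw [Real.log_mul (by positivity) (by positivity), Real.log_rpow hg,
        Real.log_rpow hb] at this
      linarith
    have e1 : (1 - v) * ((1 - v) * La + v * Real.log g)
        + v * ((1 - v) * Real.log g + v * Lb) = (1 - v) * La + v * Lb := by
      rw [hLg]; ring
    have i1 := add_le_add (mul_le_mul_of_nonneg_left hXlog h1v.le)
      (mul_le_mul_of_nonneg_left hYlog hv0.le)
    linarith
  · -- second inequality
    have hI : 0 < wId v a b := by
      rw [wId]
      have hwc : wArith v a b = c := rfl
      rw [hwc]
      exact mul_pos (mul_pos (Real.exp_pos _) (Real.rpow_pos_of_pos hc _))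
        (Real.rpow_pos_of_pos (div_pos (Real.rpow_pos_of_pos hb _)
          (Real.rpow_pos_of_pos ha _)) _)
    rw [← Real.log_le_log_iff (by positivity) hI]
    have hlogI : Real.log (wId v a b) =
        -1 + (1 - 2 * v) * c / (v * (1 - v) * (b - a)) * Lc
          + (b - a)⁻¹ * (v * b / (1 - v) * Lb - (1 - v) * a / v * La) := by
      rw [wId]
      have hwc : wArith v a b = c := rfl
      rw [hwc, Real.log_mul (by positivity) (by positivity),
        Real.log_mul (Real.exp_ne_zero _) (by positivity),
        Real.log_exp, Real.log_rpow hc,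
        Real.log_rpow (div_pos (Real.rpow_pos_of_pos hb _) (Real.rpow_pos_of_pos ha _)),
        Real.log_div (by positivity) (by positivity),
        Real.log_rpow hb, Real.log_rpow ha]
    have h2a : Real.log X ≤ (La + Lc) / 2 := by
      have hXle : X ≤ Real.sqrt (a * c) := by
        rw [Real.le_sqrt hX.le (by positivity)]
        rw [hXdef, hcdef]
        nlinarith [mul_nonneg (mul_nonneg hv0.le h1v.le) (sq_nonneg (a - g))]
      have := (Real.log_le_log_iff hX (Real.sqrt_pos.2 (by positivity))).2 hXle
      rwa [Real.log_sqrt (by positivity), Real.log_mul ha.ne' hc.ne'] at this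
    have h2b : Real.log Y ≤ (Lc + Lb) / 2 := by
      have hYle : Y ≤ Real.sqrt (c * b) := by
        rw [Real.le_sqrt hY.le (by positivity)]
        rw [hYdef, hcdef]
        nlinarith [mul_nonneg (mul_nonneg hv0.le h1v.le) (sq_nonneg (g - b))]
      have := (Real.log_le_log_iff hY (Real.sqrt_pos.2 (by positivity))).2 hYle
      rwa [Real.log_sqrt (by positivity), Real.log_mul hc.ne' hb.ne'] at this
    have A1 : 0 ≤ (c + a) * (c - a) * (Lc - La) - 2 * (c - a) ^ 2 := by
      have := aux_key hc ha; linarith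
    have A2 : 0 ≤ (b + c) * (b - c) * (Lb - Lc) - 2 * (b - c) ^ 2 := by
      have := aux_key hb hc; linarith
    have hd : b - a ≠ 0 := sub_ne_zero.2 (Ne.symm hab)
    have hT : (1 - v) * ((La + Lc) / 2) + v * ((Lc + Lb) / 2) ≤ Real.log (wId v a b) := by
      rw [hlogI, ← sub_nonneg]
      have expand : -1 + (1 - 2 * v) * c / (v * (1 - v) * (b - a)) * Lc
          + (b - a)⁻¹ * (v * b / (1 - v) * Lb - (1 - v) * a / v * La)
          - ((1 - v) * ((La + Lc) / 2) + v * ((Lc + Lb) / 2))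
          = ((1 - v) / v ^ 2 * ((c + a) * (c - a) * (Lc - La) - 2 * (c - a) ^ 2)
            + v / (1 - v) ^ 2 * ((b + c) * (b - c) * (Lb - Lc) - 2 * (b - c) ^ 2))
            / (2 * (b - a) ^ 2) := by
        rw [hcdef]
        field_simp
        ring
      rw [expand]
      apply div_nonneg
      · exact add_nonneg (mul_nonneg (by positivity) A1) (mul_nonneg (by positivity) A2)
      · positivity
    calc Real.log (X ^ (1 - v) * Y ^ v) = (1 - v) * Real.log X + v * Real.log Y := by
          rw [Real.log_mul (by positivity) (by positivity), Real.log_rpow hX,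
            Real.log_rpow hY]
      _ ≤ (1 - v) * ((La + Lc) / 2) + v * ((Lc + Lb) / 2) :=
          add_le_add (mul_le_mul_of_nonneg_left h2a h1v.le)
            (mul_le_mul_of_nonneg_left h2b hv0.le)
      _ ≤ Real.log (wId v a b) := hT
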